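/- Fix d ∈ ℤ and let X_d = { x ∈ ℕ : 2x ≥ d }. The function k : X_d × X_d → ℝ defined by k(x, x') = (x + x' − d)! is a positive semidefinite kernel on X_d. -/
import Mathlib

open MeasureTheory Set

lemma integral_pow_exp_eq_factorial (m : ℕ) :
    ∫ t in Ioi (0:ℝ), t ^ (m:ℝ) * Real.exp (-t) = m.factorial := by
  have h := Real.Gamma_eq_integral (s := (m:ℝ)+1) (by positivity)
  have h2 : Real.Gamma ((m:ℝ)+1) = m.factorial := Real.Gamma_nat_eq_factorial m
  rw [h] at h2
  rw [← h2]
  refine setIntegral_congr_fun measurableSet_Ioi fun t ht => ?_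
  rw [add_sub_cancel_right, mul_comm]

lemma integrableOn_pow_exp (p : ℝ) (hp : 0 ≤ p) :
    IntegrableOn (fun t : ℝ => t ^ p * Real.exp (-t)) (Ioi 0) := by
  have h := Real.GammaIntegral_convergent (s := p + 1) (by positivity)
  refine h.congr_fun (fun t ht => ?_) measurableSet_Ioi
  rw [add_sub_cancel_right, mul_comm]

def IsPSDKernel {X : Type*} (k : X → X → ℝ) : Prop :=
  ∀ (n : ℕ) (x : Fin n → X) (c : Fin n → ℝ),
    0 ≤ ∑ i : Fin n, ∑ j : Fin n, c i * c j * k (x i) (x j)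

/-- Lemma 2: the factorial kernel `k(x, x') = (x + x' − d)!` on
`X_d = {x ∈ ℕ : 2x ≥ d}` is positive semidefinite. -/
theorem factorial_kernel_is_psd (d : ℤ) :
    IsPSDKernel (fun (x x' : {x : ℕ // d ≤ 2 * (x : ℤ)}) =>
      (Nat.factorial ((x : ℤ) + (x' : ℤ) - d).toNat : ℝ)) := by
  intro n x c
  -- the feature map
  set g : Fin n → ℝ → ℝ :=
    fun i t => c i * (t ^ ((x i : ℝ) - d / 2) * Real.exp (-t / 2)) with hg
  have key : ∀ i j : Fin n,
      ∀ t ∈ Ioi (0:ℝ), g i t * g j t =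
        c i * c j * (t ^ (((((x i : ℕ) : ℤ) + ((x j : ℕ) : ℤ) - d).toNat : ℝ))
          * Real.exp (-t)) := by
    intro i j t ht
    have ht' : (0:ℝ) < t := ht
    have hnn : (0:ℤ) ≤ ((x i : ℕ) : ℤ) + ((x j : ℕ) : ℤ) - d := by
      have h1 := (x i).2; have h2 := (x j).2; omega
    have hcast : ((((((x i : ℕ) : ℤ) + ((x j : ℕ) : ℤ) - d).toNat : ℕ)) : ℝ)
        = ((x i : ℕ) : ℝ) + ((x j : ℕ) : ℝ) - d := by
      rw [← Int.cast_natCast (R := ℝ), Int.toNat_of_nonneg hnn]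
      push_cast
      ring
    rw [hg]
    rw [hcast, show (((x i : ℕ) : ℝ) + ((x j : ℕ) : ℝ) - d)
        = (((x i : ℕ) : ℝ) - d/2) + (((x j : ℕ) : ℝ) - d/2) by ring,
      Real.rpow_add ht', show (-t : ℝ) = -t/2 + -t/2 by ring, Real.exp_add]
    ring
  have hint : ∀ i j : Fin n,
      IntegrableOn (fun t => g i t * g j t) (Ioi 0) := by
    intro i j
    have h : IntegrableOn (fun t : ℝ => c i * c j *
        (t ^ (((((x i : ℕ) : ℤ) + ((x j : ℕ) : ℤ) - d).toNat : ℝ)) * Real.exp (-t))) (Ioi 0) :=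
      (integrableOn_pow_exp _ (by positivity)).const_mul (c i * c j)
    exact h.congr_fun (fun t ht => (key i j t ht).symm) measurableSet_Ioi
  have hval : ∀ i j : Fin n,
      ∫ t in Ioi (0:ℝ), g i t * g j t =
        c i * c j * (Nat.factorial ((((x i : ℕ) : ℤ) + ((x j : ℕ) : ℤ) - d).toNat) : ℝ) := by
    intro i j
    rw [setIntegral_congr_fun measurableSet_Ioi (key i j)]
    rw [integral_const_mul, integral_pow_exp_eq_factorial]
  calc (0:ℝ) ≤ ∫ t in Ioi (0:ℝ), (∑ i, g i t) ^ 2 := by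
        apply integral_nonneg
        intro t; positivity
    _ = ∑ i : Fin n, ∑ j : Fin n, c i * c j *
          (Nat.factorial ((((x i : ℕ) : ℤ) + ((x j : ℕ) : ℤ) - d).toNat) : ℝ) := by
        have expand : ∀ t : ℝ, (∑ i, g i t) ^ 2 = ∑ i, ∑ j, g i t * g j t := by
          intro t
          rw [sq, Finset.sum_mul_sum]
        simp_rw [expand]
        rw [integral_finset_sum _ (fun i _ => integrable_finset_sum _
          (fun j _ => hint i j))]
        refine Finset.sum_congr rfl fun i _ => ?_
        rw [integral_finset_sum _ (fun j _ => hint i j)]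
        exact Finset.sum_congr rfl fun j _ => hval i j
    _ = _ := rfl
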